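/- arXiv:2201.01836 — 5 statements merged into one kernel-verified Lean document; each statement's English description precedes it below -/
import Mathlib

section
/- Let r : ℕ → ℝ and v : ℕ → ℝ be bounded sequences, let γ ∈ [0,1) and λ ∈ [0,1). Then the doubly-infinite λ-return sum can be regrouped as follows: (1−λ) · ∑_{n=1}^∞ λ^{n−1} · ( (∑_{k=1}^{n} γ^{k−1} · r k) + γ^n · v n ) = r 1 + γ · ∑_{n=1}^∞ (λγ)^{n−1} · ( (1−λ) · v n + λ · r (n+1) ), where both series converge absolutely. -/
private lemma aux_summable {q : ℝ} (f : ℕ → ℝ) {C : ℝ} (hq0 : 0 ≤ q) (hq1 : q < 1)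
    (hf : ∀ n, |f n| ≤ C) : Summable fun n => q ^ n * f n := by
  have h : Summable fun n : ℕ => q ^ n * C :=
    (summable_geometric_of_lt_one hq0 hq1).mul_right C
  refine Summable.of_abs (h.of_nonneg_of_le (fun n => abs_nonneg _) fun n => ?_)
  rw [abs_mul, abs_pow, abs_of_nonneg hq0]
  exact mul_le_mul_of_nonneg_left (hf n) (pow_nonneg hq0 n)

/-- The forward-view λ-return regrouping identity. Here `r k` plays the role of the
reward `R_{t+k}` and `v n` of the value estimate `v_θ(S_{t+n})`. We index the infinite
sums over `n : ℕ` starting at `0`, corresponding to the paper's index `n+1 ≥ 1`. -/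
theorem lambda_return_regrouping (r v : ℕ → ℝ) (γ lam : ℝ)
    (hr : ∃ C, ∀ n, |r n| ≤ C) (hv : ∃ C, ∀ n, |v n| ≤ C)
    (hγ0 : 0 ≤ γ) (hγ1 : γ < 1) (hl0 : 0 ≤ lam) (hl1 : lam < 1) :
    Summable (fun n : ℕ => |lam ^ n *
        ((∑ k ∈ Finset.range (n + 1), γ ^ k * r (k + 1)) + γ ^ (n + 1) * v (n + 1))|) ∧
    Summable (fun n : ℕ => |(lam * γ) ^ n * ((1 - lam) * v (n + 1) + lam * r (n + 2))|) ∧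
    (1 - lam) * (∑' n : ℕ, lam ^ n *
        ((∑ k ∈ Finset.range (n + 1), γ ^ k * r (k + 1)) + γ ^ (n + 1) * v (n + 1)))
      = r 1 + γ * ∑' n : ℕ, (lam * γ) ^ n * ((1 - lam) * v (n + 1) + lam * r (n + 2)) := by
  obtain ⟨Cr, hCr⟩ := hr
  obtain ⟨Cv, hCv⟩ := hv
  have hCr0 : 0 ≤ Cr := (abs_nonneg _).trans (hCr 0)
  have hCv0 : 0 ≤ Cv := (abs_nonneg _).trans (hCv 0)
  set S : ℕ → ℝ := fun n => ∑ k ∈ Finset.range (n + 1), γ ^ k * r (k + 1) with hS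
  have hlg0 : 0 ≤ lam * γ := mul_nonneg hl0 hγ0
  have hlg1 : lam * γ < 1 :=
    lt_of_le_of_lt (mul_le_of_le_one_right hl0 hγ1.le) hl1
  have hSb : ∀ n, |S n| ≤ Cr / (1 - γ) := by
    intro n
    calc |S n| ≤ ∑ k ∈ Finset.range (n + 1), |γ ^ k * r (k + 1)| :=
          Finset.abs_sum_le_sum_abs _ _
      _ ≤ ∑ k ∈ Finset.range (n + 1), γ ^ k * Cr := by
          apply Finset.sum_le_sum
          intro k _
          rw [abs_mul, abs_pow, abs_of_nonneg hγ0]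
          exact mul_le_mul_of_nonneg_left (hCr _) (pow_nonneg hγ0 k)
      _ = (∑ k ∈ Finset.range (n + 1), γ ^ k) * Cr := by
          rw [← Finset.sum_mul]
      _ ≤ (1 - γ)⁻¹ * Cr := by
          apply mul_le_mul_of_nonneg_right _ hCr0
          have := Summable.sum_le_tsum (Finset.range (n + 1))
            (fun k _ => pow_nonneg hγ0 k) (summable_geometric_of_lt_one hγ0 hγ1)
          rwa [tsum_geometric_of_lt_one hγ0 hγ1] at this
      _ = Cr / (1 - γ) := by rw [div_eq_inv_mul]
  have hSv : ∀ n, |S n + γ ^ (n + 1) * v (n + 1)| ≤ Cr / (1 - γ) + Cv := by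
    intro n
    refine (abs_add_le _ _).trans (add_le_add (hSb n) ?_)
    rw [abs_mul, abs_pow, abs_of_nonneg hγ0]
    calc γ ^ (n + 1) * |v (n + 1)| ≤ 1 * Cv :=
          mul_le_mul (pow_le_one₀ hγ0 hγ1.le) (hCv _) (abs_nonneg _) zero_le_one
      _ = Cv := one_mul _
  have hVR : ∀ n, |(1 - lam) * v (n + 1) + lam * r (n + 2)| ≤ (1 - lam) * Cv + lam * Cr := by
    intro n
    refine (abs_add_le _ _).trans (add_le_add ?_ ?_) <;> rw [abs_mul]
    · rw [abs_of_nonneg (by linarith : (0:ℝ) ≤ 1 - lam)]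
      exact mul_le_mul_of_nonneg_left (hCv _) (by linarith)
    · rw [abs_of_nonneg hl0]
      exact mul_le_mul_of_nonneg_left (hCr _) hl0
  have sum1 : Summable fun n => lam ^ n * (S n + γ ^ (n + 1) * v (n + 1)) :=
    aux_summable _ hl0 hl1 hSv
  have sum2 : Summable fun n => (lam * γ) ^ n * ((1 - lam) * v (n + 1) + lam * r (n + 2)) :=
    aux_summable _ hlg0 hlg1 hVR
  refine ⟨sum1.abs, sum2.abs, ?_⟩
  have sumS : Summable fun n => lam ^ n * S n := aux_summable _ hl0 hl1 hSb
  have sumS' : Summable fun n => lam ^ (n + 1) * S (n + 1) := by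
    have := (summable_nat_add_iff 1).mpr sumS
    simpa using this
  have sumlS : Summable fun n => lam ^ (n + 1) * S n :=
    (sumS.mul_left lam).congr fun n => by ring
  have sumV : Summable fun n => lam ^ n * (γ ^ (n + 1) * v (n + 1)) := by
    apply aux_summable (C := Cv) _ hl0 hl1
    intro n
    rw [abs_mul, abs_pow, abs_of_nonneg hγ0]
    calc γ ^ (n + 1) * |v (n + 1)| ≤ 1 * Cv :=
          mul_le_mul (pow_le_one₀ hγ0 hγ1.le) (hCv _) (abs_nonneg _) zero_le_one
      _ = Cv := one_mul _
  have sumVg : Summable fun n => (lam * γ) ^ n * v (n + 1) :=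
    aux_summable _ hlg0 hlg1 (fun n => hCv _)
  have sumRg : Summable fun n => (lam * γ) ^ n * r (n + 2) :=
    aux_summable _ hlg0 hlg1 (fun n => hCr _)
  -- key lemma
  have key : (1 - lam) * (∑' n, lam ^ n * S n)
      = r 1 + ∑' n, (lam * γ) ^ (n + 1) * r (n + 2) := by
    have hA : (∑' n, lam ^ n * S n)
        = S 0 + ∑' n, lam ^ (n + 1) * S (n + 1) := by
      rw [Summable.tsum_eq_zero_add sumS]; simp
    have hlA : lam * (∑' n, lam ^ n * S n) = ∑' n, lam ^ (n + 1) * S n := by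
      rw [← tsum_mul_left]
      exact tsum_congr fun n => by ring
    have hS0 : S 0 = r 1 := by simp [hS]
    have hdiff : ∀ n : ℕ, lam ^ (n + 1) * S (n + 1) - lam ^ (n + 1) * S n
        = (lam * γ) ^ (n + 1) * r (n + 2) := by
      intro n
      have hstep : S (n + 1) = S n + γ ^ (n + 1) * r (n + 2) := by
        simp [hS, Finset.sum_range_succ]
      rw [hstep, mul_pow]; ring
    have hsplit : (1 - lam) * (∑' n, lam ^ n * S n)
        = (∑' n, lam ^ n * S n) - lam * (∑' n, lam ^ n * S n) := by ring
    rw [hsplit, hlA, hA, hS0, add_sub_assoc, ← Summable.tsum_sub sumS' sumlS]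
    congr 1
    exact tsum_congr hdiff
  -- split the LHS tsum
  have fold : (∑' n : ℕ, lam ^ n *
      ((∑ k ∈ Finset.range (n + 1), γ ^ k * r (k + 1)) + γ ^ (n + 1) * v (n + 1)))
      = (∑' n, lam ^ n * S n) + ∑' n, lam ^ n * (γ ^ (n + 1) * v (n + 1)) := by
    rw [← Summable.tsum_add sumS sumV]
    exact tsum_congr fun n => by rw [hS]; ring
  -- split the RHS tsum
  have e3 : (∑' n : ℕ, (lam * γ) ^ n * ((1 - lam) * v (n + 1) + lam * r (n + 2)))
      = (1 - lam) * (∑' n, (lam * γ) ^ n * v (n + 1))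
        + lam * ∑' n, (lam * γ) ^ n * r (n + 2) := by
    rw [← tsum_mul_left, ← tsum_mul_left, ← Summable.tsum_add (sumVg.mul_left _) (sumRg.mul_left _)]
    exact tsum_congr fun n => by ring
  have e1 : (∑' n : ℕ, lam ^ n * (γ ^ (n + 1) * v (n + 1)))
      = γ * ∑' n, (lam * γ) ^ n * v (n + 1) := by
    rw [← tsum_mul_left]
    exact tsum_congr fun n => by rw [mul_pow]; ring
  have e2 : (∑' n : ℕ, (lam * γ) ^ (n + 1) * r (n + 2))
      = (lam * γ) * ∑' n, (lam * γ) ^ n * r (n + 2) := by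
    rw [← tsum_mul_left]
    exact tsum_congr fun n => by rw [pow_succ]; ring
  rw [fold, mul_add, key, e1, e2, e3]
  ring
end

section
/- Let S d : ℕ, Φ : Matrix (Fin S) (Fin d) ℝ, D P : Matrix (Fin S) (Fin S) ℝ, R : Fin S → ℝ, γ ∈ ℝ. Set A = Φᵀ * D * Φ and B = Φᵀ * D * P * Φ. Assume A is invertible and A − γ•B is invertible. If θ : Fin d → ℝ satisfies A⁻¹ *ᵥ ( Φᵀ * D *ᵥ (R + γ • (P * Φ) *ᵥ θ) ) = θ, then θ = (A − γ•B)⁻¹ *ᵥ (Φᵀ * D *ᵥ R); that is, the projected Bellman equation has the TD fixed point θ_TD as its unique solution. -/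
open Matrix

/-- Any solution of the projected Bellman fixed-point equation equals the TD fixed
point `θ_TD = (A - γB)⁻¹ ΦᵀDR`; i.e. the equation has a unique solution. -/
theorem projected_bellman_unique_solution (S d : ℕ)
    (Φ : Matrix (Fin S) (Fin d) ℝ) (D P : Matrix (Fin S) (Fin S) ℝ)
    (R : Fin S → ℝ) (γ : ℝ)
    (A B : Matrix (Fin d) (Fin d) ℝ)
    (hA : A = Φᵀ * D * Φ) (hB : B = Φᵀ * D * P * Φ)
    (hAinv : IsUnit A) (hABinv : IsUnit (A - γ • B))
    (θ : Fin d → ℝ)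
    (hθ : A⁻¹ *ᵥ ((Φᵀ * D) *ᵥ (R + γ • ((P * Φ) *ᵥ θ))) = θ) :
    θ = (A - γ • B)⁻¹ *ᵥ ((Φᵀ * D) *ᵥ R) := by
  have hAdet : IsUnit A.det := (isUnit_iff_isUnit_det A).mp hAinv
  have hABdet : IsUnit (A - γ • B).det := (isUnit_iff_isUnit_det _).mp hABinv
  have h1 : A *ᵥ θ = (Φᵀ * D) *ᵥ (R + γ • ((P * Φ) *ᵥ θ)) := by
    conv_lhs => rw [← hθ]
    simp only [mulVec_mulVec, ← Matrix.mul_assoc, mul_nonsing_inv A hAdet,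
      Matrix.one_mul]
  have h2 : (A - γ • B) *ᵥ θ = (Φᵀ * D) *ᵥ R := by
    have hBθ : B *ᵥ θ = (Φᵀ * D) *ᵥ ((P * Φ) *ᵥ θ) := by
      simp only [mulVec_mulVec, hB, Matrix.mul_assoc]
    rw [sub_mulVec, h1, mulVec_add, mulVec_smul, smul_mulVec, hBθ]
    abel
  calc θ = (A - γ • B)⁻¹ *ᵥ ((A - γ • B) *ᵥ θ) := by
        rw [mulVec_mulVec, nonsing_inv_mul _ hABdet, one_mulVec]
    _ = (A - γ • B)⁻¹ *ᵥ ((Φᵀ * D) *ᵥ R) := by rw [h2]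
end

section
/- Let S d : ℕ, Φ : Matrix (Fin S) (Fin d) ℝ, D P : Matrix (Fin S) (Fin S) ℝ, R : Fin S → ℝ, γ η ∈ ℝ. Set A = Φᵀ * D * Φ and B = Φᵀ * D * P * Φ. Assume A, A − γ•B, and A − (η*γ)•B are all invertible. Define θ_TD = (A − γ•B)⁻¹ *ᵥ (Φᵀ * D *ᵥ R), ŵ = A⁻¹ *ᵥ (Φᵀ * D *ᵥ R), and Ξ_TD^η = (A − (η*γ)•B)⁻¹ * A. Then (Ξ_TD^η)⁻¹ *ᵥ θ_TD = (1−η) • θ_TD + η • ŵ. -/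
open Matrix

/-- Applying the inverse of the ηγ-discounted SF fixed point to the TD fixed point
yields the mixture `(1-η) • θ_TD + η • ŵ`. -/
theorem eta_sf_inverse_mixture_identity (S d : ℕ)
    (Φ : Matrix (Fin S) (Fin d) ℝ) (D P : Matrix (Fin S) (Fin S) ℝ)
    (R : Fin S → ℝ) (γ η : ℝ)
    (A B : Matrix (Fin d) (Fin d) ℝ)
    (hA : A = Φᵀ * D * Φ) (hB : B = Φᵀ * D * P * Φ)
    (hAinv : IsUnit A) (hγBinv : IsUnit (A - γ • B)) (hηγBinv : IsUnit (A - (η * γ) • B))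
    (θTD w : Fin d → ℝ)
    (hθ : θTD = (A - γ • B)⁻¹ *ᵥ ((Φᵀ * D) *ᵥ R))
    (hw : w = A⁻¹ *ᵥ ((Φᵀ * D) *ᵥ R))
    (ΞTDη : Matrix (Fin d) (Fin d) ℝ) (hΞ : ΞTDη = (A - (η * γ) • B)⁻¹ * A) :
    ΞTDη⁻¹ *ᵥ θTD = (1 - η) • θTD + η • w := by
  have hAdet : IsUnit A.det := (Matrix.isUnit_iff_isUnit_det A).mp hAinv
  have hγdet : IsUnit (A - γ • B).det := (Matrix.isUnit_iff_isUnit_det _).mp hγBinv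
  have hηγdet : IsUnit (A - (η * γ) • B).det := (Matrix.isUnit_iff_isUnit_det _).mp hηγBinv
  have hΞinv : ΞTDη⁻¹ = A⁻¹ * (A - (η * γ) • B) := by
    rw [hΞ, Matrix.mul_inv_rev, Matrix.nonsing_inv_nonsing_inv _ hηγdet]
  set r : Fin d → ℝ := (Φᵀ * D) *ᵥ R with hr
  have hsplit : A - (η * γ) • B = (1 - η) • A + η • (A - γ • B) := by
    rw [smul_sub, smul_smul]; module
  have hAθ : (A - γ • B) *ᵥ θTD = r := by
    rw [hθ, Matrix.mulVec_mulVec, Matrix.mul_nonsing_inv _ hγdet, Matrix.one_mulVec]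
  rw [hΞinv, ← Matrix.mulVec_mulVec, hsplit, Matrix.add_mulVec,
    Matrix.smul_mulVec, Matrix.smul_mulVec, hAθ,
    Matrix.mulVec_add, Matrix.mulVec_smul, Matrix.mulVec_smul,
    Matrix.mulVec_mulVec, Matrix.nonsing_inv_mul _ hAdet, Matrix.one_mulVec, hw, hr]
end

section
/- Let S d : ℕ, Φ : Matrix (Fin S) (Fin d) ℝ, D P : Matrix (Fin S) (Fin S) ℝ, R : Fin S → ℝ, γ η ∈ ℝ. Set A = Φᵀ * D * Φ and B = Φᵀ * D * P * Φ. Assume A, A − γ•B, and A − (η*γ)•B are all invertible. Define θ_TD = (A − γ•B)⁻¹ *ᵥ (Φᵀ * D *ᵥ R), θ_TD^η = (A − (η*γ)•B)⁻¹ *ᵥ (Φᵀ * D *ᵥ R), and Ξ_TD^η = (A − (η*γ)•B)⁻¹ * A. Then (Ξ_TD^η)⁻¹ *ᵥ θ_TD = (1−η) • θ_TD + η • ((Ξ_TD^η)⁻¹ *ᵥ θ_TD^η). -/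
open Matrix

/-- Lemma B.2 of the paper: the key identity relating the TD fixed point, the
ηγ-discounted TD fixed point and the ηγ-discounted SF fixed point:
`(Ξ_TD^η)⁻¹ θ_TD = (1-η) • θ_TD + η • ((Ξ_TD^η)⁻¹ θ_TD^η)`. -/
theorem eta_sf_inverse_td_identity (S d : ℕ)
    (Φ : Matrix (Fin S) (Fin d) ℝ) (D P : Matrix (Fin S) (Fin S) ℝ)
    (R : Fin S → ℝ) (γ η : ℝ)
    (A B : Matrix (Fin d) (Fin d) ℝ)
    (hA : A = Φᵀ * D * Φ) (hB : B = Φᵀ * D * P * Φ)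
    (hAinv : IsUnit A) (hγBinv : IsUnit (A - γ • B)) (hηγBinv : IsUnit (A - (η * γ) • B))
    (θTD θTDη : Fin d → ℝ)
    (hθ : θTD = (A - γ • B)⁻¹ *ᵥ ((Φᵀ * D) *ᵥ R))
    (hθη : θTDη = (A - (η * γ) • B)⁻¹ *ᵥ ((Φᵀ * D) *ᵥ R))
    (ΞTDη : Matrix (Fin d) (Fin d) ℝ) (hΞ : ΞTDη = (A - (η * γ) • B)⁻¹ * A) :
    ΞTDη⁻¹ *ᵥ θTD = (1 - η) • θTD + η • (ΞTDη⁻¹ *ᵥ θTDη) := by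
  set c : Fin d → ℝ := (Φᵀ * D) *ᵥ R with hc
  have hAdet : IsUnit A.det := (Matrix.isUnit_iff_isUnit_det A).mp hAinv
  have hγdet : IsUnit (A - γ • B).det := (Matrix.isUnit_iff_isUnit_det _).mp hγBinv
  have hηdet : IsUnit (A - (η * γ) • B).det := (Matrix.isUnit_iff_isUnit_det _).mp hηγBinv
  have hΞinv : ΞTDη⁻¹ = A⁻¹ * (A - (η * γ) • B) := by
    rw [hΞ, Matrix.mul_inv_rev, Matrix.nonsing_inv_nonsing_inv _ hηdet]
  -- key matrix identity
  set X : Matrix (Fin d) (Fin d) ℝ := (1 - η) • (A - γ • B)⁻¹ + η • A⁻¹ with hX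
  have key : A * X * (A - γ • B) = A - (η * γ) • B := by
    rw [hX]
    rw [Matrix.mul_add, Matrix.add_mul, Matrix.mul_smul, Matrix.mul_smul,
      Matrix.smul_mul, Matrix.smul_mul, Matrix.mul_nonsing_inv _ hAdet]
    rw [Matrix.mul_assoc, Matrix.nonsing_inv_mul _ hγdet, Matrix.mul_one, Matrix.one_mul]
    ext i j
    simp [Matrix.sub_apply, Matrix.smul_apply]
    ring
  have hmain : A⁻¹ * (A - (η * γ) • B) * (A - γ • B)⁻¹ = X := by
    rw [← key]
    rw [Matrix.mul_assoc, Matrix.mul_assoc, Matrix.mul_nonsing_inv _ hγdet, Matrix.mul_one,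
      ← Matrix.mul_assoc, Matrix.nonsing_inv_mul _ hAdet, Matrix.one_mul]
  have hη' : ΞTDη⁻¹ *ᵥ θTDη = A⁻¹ *ᵥ c := by
    rw [hΞinv, hθη, Matrix.mulVec_mulVec, Matrix.mul_assoc,
      Matrix.mul_nonsing_inv _ hηdet, Matrix.mul_one]
  rw [hη', hΞinv, hθ, ← Matrix.mulVec_mulVec, Matrix.mulVec_mulVec, Matrix.mulVec_mulVec,
    hmain, hX]
  rw [Matrix.add_mulVec, Matrix.smul_mulVec, Matrix.smul_mulVec]
end

section
/- Let S d : ℕ, Φ : Matrix (Fin S) (Fin d) ℝ, D P : Matrix (Fin S) (Fin S) ℝ, R : Fin S → ℝ, γ η ∈ ℝ. Set A = Φᵀ * D * Φ and B = Φᵀ * D * P * Φ. Assume A, A − γ•B, and A − (η*γ)•B are all invertible. Define θ_TD = (A − γ•B)⁻¹ *ᵥ (Φᵀ * D *ᵥ R), ŵ = A⁻¹ *ᵥ (Φᵀ * D *ᵥ R), and Ξ_TD^η = (A − (η*γ)•B)⁻¹ * A. Then θ_TD satisfies the projected fixed-point equation of one-step value learning with the η-return mixture target: A⁻¹ *ᵥ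 ( Φᵀ * D *ᵥ ( R + γ • ((P * Φ) *ᵥ ( (1−η) • (Ξ_TD^η *ᵥ θ_TD) + η • (Ξ_TD^η *ᵥ ŵ) )) ) ) = θ_TD. -/
open Matrix

/-- Proposition 1 of the paper: with the SF parameters at their ηγ-discounted fixed
point `Ξ_TD^η` and the reward parameters at the regression solution `ŵ`, the TD fixed
point `θ_TD` satisfies the projected fixed-point equation of one-step value learning
with the η-return mixture target. -/
theorem eta_return_mixture_has_td_fixed_point (S d : ℕ)
    (Φ : Matrix (Fin S) (Fin d) ℝ) (D P : Matrix (Fin S) (Fin S) ℝ)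
    (R : Fin S → ℝ) (γ η : ℝ)
    (A B : Matrix (Fin d) (Fin d) ℝ)
    (hA : A = Φᵀ * D * Φ) (hB : B = Φᵀ * D * P * Φ)
    (hAinv : IsUnit A) (hγBinv : IsUnit (A - γ • B)) (hηγBinv : IsUnit (A - (η * γ) • B))
    (θTD w : Fin d → ℝ)
    (hθ : θTD = (A - γ • B)⁻¹ *ᵥ ((Φᵀ * D) *ᵥ R))
    (hw : w = A⁻¹ *ᵥ ((Φᵀ * D) *ᵥ R))
    (ΞTDη : Matrix (Fin d) (Fin d) ℝ) (hΞ : ΞTDη = (A - (η * γ) • B)⁻¹ * A) :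
    A⁻¹ *ᵥ ((Φᵀ * D) *ᵥ (R + γ • ((P * Φ) *ᵥ
        ((1 - η) • (ΞTDη *ᵥ θTD) + η • (ΞTDη *ᵥ w))))) = θTD := by
  have hAd : IsUnit A.det := (Matrix.isUnit_iff_isUnit_det A).mp hAinv
  have hγd : IsUnit (A - γ • B).det := (Matrix.isUnit_iff_isUnit_det _).mp hγBinv
  have hηd : IsUnit (A - (η * γ) • B).det := (Matrix.isUnit_iff_isUnit_det _).mp hηγBinv
  set c : Fin d → ℝ := (Φᵀ * D) *ᵥ R with hc
  -- c = (A - γ•B) *ᵥ θTD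
  have hcθ : (A - γ • B) *ᵥ θTD = c := by
    rw [hθ, Matrix.mulVec_mulVec, Matrix.mul_nonsing_inv _ hγd, Matrix.one_mulVec]
  -- A *ᵥ w = c
  have hAw : A *ᵥ w = c := by
    rw [hw, Matrix.mulVec_mulVec, Matrix.mul_nonsing_inv _ hAd, Matrix.one_mulVec]
  -- key: the mixed SF prediction equals θTD
  have key : (1 - η) • (ΞTDη *ᵥ θTD) + η • (ΞTDη *ᵥ w) = θTD := by
    have h1 : (1 - η) • (A *ᵥ θTD) + η • (A *ᵥ w) = (A - (η * γ) • B) *ᵥ θTD := by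
      rw [hAw, ← hcθ]
      simp only [Matrix.sub_mulVec, Matrix.smul_mulVec]
      ext i
      simp [smul_smul]
      ring
    have h1' : A *ᵥ ((1 - η) • θTD + η • w) = (A - (η * γ) • B) *ᵥ θTD := by
      rw [Matrix.mulVec_add, Matrix.mulVec_smul, Matrix.mulVec_smul]; exact h1
    rw [hΞ]
    simp only [← Matrix.mulVec_mulVec, ← Matrix.mulVec_smul, ← Matrix.mulVec_add]
    rw [h1', Matrix.mulVec_mulVec, Matrix.nonsing_inv_mul _ hηd, Matrix.one_mulVec]
  rw [key]
  have hBθ : (Φᵀ * D) *ᵥ ((P * Φ) *ᵥ θTD) = B *ᵥ θTD := by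
    rw [Matrix.mulVec_mulVec, hB, Matrix.mul_assoc, Matrix.mul_assoc, Matrix.mul_assoc]
  rw [Matrix.mulVec_add, Matrix.mulVec_smul, hBθ]
  have : c + γ • (B *ᵥ θTD) = A *ᵥ θTD := by
    rw [← hcθ, Matrix.sub_mulVec, Matrix.smul_mulVec]
    abel
  rw [this, Matrix.mulVec_mulVec, Matrix.nonsing_inv_mul _ hAd, Matrix.one_mulVec]
end
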